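/- For every real ε with 0 < ε < 1 and every integer n ≥ 3, there exists k₀ such that for all k ≥ k₀, the size Ramsey number satisfies r̂(K_{1,k}, K_n) ≥ max{ k²/2, (1−ε)·⌊(n−2)²/4⌋·k²/2 }. -/

import Mathlib

open SimpleGraph

/-- `H` contains a copy of `G`, i.e. there is an injective graph homomorphism `G →g H`. -/
def ContainsCopy {α β : Type*} (G : SimpleGraph α) (H : SimpleGraph β) : Prop :=
  ∃ f : G →g H, Function.Injective f

/-- `F ⟶ (G, H)` : for every red-blue colouring of the edges of `F` (encoded by the red
subgraph `R ≤ F`, the blue edges being `F \ R`) there is a red copy of `G` or a blue copy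
of `H`. -/
def Arrows {γ α β : Type*} (F : SimpleGraph γ) (G : SimpleGraph α) (H : SimpleGraph β) : Prop :=
  ∀ R : SimpleGraph γ, R ≤ F → ContainsCopy G R ∨ ContainsCopy H (F \ R)

/-- The Ramsey number `r(G, H)` : the least `n` such that `K_n ⟶ (G, H)`. -/
noncomputable def ramseyNumber {α β : Type*} (G : SimpleGraph α) (H : SimpleGraph β) : ℕ :=
  sInf {n : ℕ | Arrows (⊤ : SimpleGraph (Fin n)) G H}

/-- The size Ramsey number `r̂(G, H)` : the least number of edges of a graph `F` with
`F ⟶ (G, H)`. -/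
noncomputable def sizeRamsey {α β : Type*} (G : SimpleGraph α) (H : SimpleGraph β) : ℕ :=
  sInf {m : ℕ | ∃ (N : ℕ) (F : SimpleGraph (Fin N)), Arrows F G H ∧ F.edgeSet.ncard = m}

/-- The restricted size Ramsey number `r̂*(G, H)` : the least number of edges of a graph `F`
on exactly `r(G, H)` vertices with `F ⟶ (G, H)`. -/
noncomputable def restrictedSizeRamsey {α β : Type*} (G : SimpleGraph α) (H : SimpleGraph β) : ℕ :=
  sInf {m : ℕ | ∃ F : SimpleGraph (Fin (ramseyNumber G H)),
    Arrows F G H ∧ F.edgeSet.ncard = m}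

/-- The star `K_{1,k}` with `k` edges. -/
def starGraph (k : ℕ) : SimpleGraph (Fin 1 ⊕ Fin k) := completeBipartiteGraph (Fin 1) (Fin k)



set_option linter.unusedSectionVars false
set_option linter.unusedVariables false
set_option maxHeartbeats 1000000

section Helpers

variable {V : Type*} [Fintype V] [DecidableEq V]

lemma star_adj (k : ℕ) (a : Fin 1) (i : Fin k) : (_root_.starGraph k).Adj (Sum.inl a) (Sum.inr i) := by
  simp [_root_.starGraph]

lemma no_star (k : ℕ) (R : SimpleGraph V)
    (h : ∀ v : V, ∃ s : Finset V, (∀ w, R.Adj v w → w ∈ s) ∧ s.card < k) :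
    ¬ ContainsCopy (_root_.starGraph k) R := by
  rintro ⟨f, hf⟩
  obtain ⟨s, hs, hcard⟩ := h (f (Sum.inl 0))
  have hadj : ∀ i : Fin k, R.Adj (f (Sum.inl 0)) (f (Sum.inr i)) :=
    fun i => f.map_adj (star_adj k 0 i)
  have hinj : Function.Injective (fun i : Fin k => f (Sum.inr i)) := by
    intro i j hij
    exact Sum.inr_injective (hf hij)
  have hsub : (Finset.univ.image fun i : Fin k => f (Sum.inr i)) ⊆ s := by
    intro w hw
    obtain ⟨i, _, rfl⟩ := Finset.mem_image.1 hw
    exact hs _ (hadj i)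
  have hk : k ≤ s.card := by
    have := Finset.card_le_card hsub
    rwa [Finset.card_image_of_injective _ hinj, Finset.card_univ, Fintype.card_fin] at this
  omega

lemma star_copy (k : ℕ) (R : SimpleGraph V) (v : V) (g : Fin k → V)
    (hg : Function.Injective g) (hadj : ∀ i, R.Adj v (g i)) :
    ContainsCopy (_root_.starGraph k) R := by
  refine ⟨⟨Sum.elim (fun _ => v) g, ?_⟩, ?_⟩
  · intro p q hpq
    match p, q with
    | Sum.inl a, Sum.inr j => exact hadj j
    | Sum.inr i, Sum.inl b => exact (hadj i).symm
    | Sum.inl a, Sum.inl b => exact absurd hpq (by simp [_root_.starGraph])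
    | Sum.inr i, Sum.inr j => exact absurd hpq (by simp [_root_.starGraph])
  · intro p q hpq
    match p, q with
    | Sum.inl a, Sum.inl b => exact congrArg Sum.inl (Subsingleton.elim a b)
    | Sum.inl a, Sum.inr j => exact absurd hpq (hadj j).ne
    | Sum.inr i, Sum.inl b => exact absurd hpq.symm (hadj i).ne
    | Sum.inr i, Sum.inr j => exact congrArg Sum.inr (hg hpq)

lemma no_clique (n r : ℕ) (hr : r < n) (B : SimpleGraph V) (φ : V → ℕ)
    (hφ : ∀ v, φ v < r) (hcol : ∀ ⦃v w⦄, B.Adj v w → φ v ≠ φ w) :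
    ¬ ContainsCopy (⊤ : SimpleGraph (Fin n)) B := by
  rintro ⟨f, -⟩
  have hinj : Function.Injective (fun i : Fin n => (⟨φ (f i), hφ _⟩ : Fin r)) := by
    intro i j hij
    by_contra hne
    have hadj : (⊤ : SimpleGraph (Fin n)).Adj i j := by
      rw [SimpleGraph.top_adj]; exact hne
    exact hcol (f.map_adj hadj) (by simpa using congrArg Fin.val hij)
  have := Fintype.card_le_of_injective _ hinj
  simp only [Fintype.card_fin] at this
  omega

lemma kn_copy (n : ℕ) (B : SimpleGraph V) (f : Fin n → V)
    (h : ∀ i j, i ≠ j → B.Adj (f i) (f j)) :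
    ContainsCopy (⊤ : SimpleGraph (Fin n)) B := by
  refine ⟨⟨f, fun {i j} hij => h i j ((SimpleGraph.top_adj _ _).1 hij)⟩, ?_⟩
  intro i j hij
  by_contra hne
  exact (h i j hne).ne hij

lemma indep (R : SimpleGraph V) [DecidableRel R.Adj] (k : ℕ) (hk : 1 ≤ k)
    (hd : ∀ v, R.degree v < k) :
    ∀ (n : ℕ) (s : Finset V), n * k ≤ s.card →
      ∃ t ⊆ s, t.card = n ∧ ∀ v ∈ t, ∀ w ∈ t, v ≠ w → ¬ R.Adj v w := by
  intro n
  induction n with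
  | zero => exact fun s _ => ⟨∅, Finset.empty_subset s, Finset.card_empty, by simp⟩
  | succ m ih =>
    intro s hs
    have hs' : m * k + k ≤ s.card := by
      calc m * k + k = (m + 1) * k := by ring
        _ ≤ s.card := hs
    have hkk : k ≤ s.card := le_trans (Nat.le_add_left _ _) hs'
    obtain ⟨v, hv⟩ : s.Nonempty := Finset.card_pos.1 (by omega)
    have hcard' : m * k ≤ (s \ insert v (R.neighborFinset v)).card := by
      have h1 : s.card - (insert v (R.neighborFinset v)).card
          ≤ (s \ insert v (R.neighborFinset v)).card := Finset.le_card_sdiff _ _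
      have h2 : (insert v (R.neighborFinset v)).card ≤ k := by
        have h3 := Finset.card_insert_le v (R.neighborFinset v)
        have h4 : (R.neighborFinset v).card < k := hd v
        omega
      have h5 : m * k + k ≤ s.card := hs'
      generalize m * k = A at h5 ⊢
      omega
    obtain ⟨t', ht's, ht'card, ht'ind⟩ := ih _ hcard'
    have hvns : v ∉ s \ insert v (R.neighborFinset v) := by simp
    refine ⟨insert v t', ?_, ?_, ?_⟩
    · intro x hx
      rcases Finset.mem_insert.1 hx with rfl | hx
      · exact hv
      · exact Finset.sdiff_subset (ht's hx)
    · rw [Finset.card_insert_of_notMem (fun h => hvns (ht's h)), ht'card]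
    · intro x hx y hy hxy
      have hnadj : ∀ z ∈ t', ¬ R.Adj v z := by
        intro z hz hadj
        exact (Finset.mem_sdiff.1 (ht's hz)).2
          (Finset.mem_insert_of_mem ((R.mem_neighborFinset v z).2 hadj))
      rcases Finset.mem_insert.1 hx with hx' | hx'
      · rcases Finset.mem_insert.1 hy with hy' | hy'
        · exact absurd (hx'.trans hy'.symm) hxy
        · exact fun hadj => hnadj y hy' (hx' ▸ hadj)
      · rcases Finset.mem_insert.1 hy with hy' | hy'
        · exact fun hadj => hnadj x hx' (hy' ▸ hadj).symm
        · exact ht'ind x hx' y hy' hxy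

end Helpers

lemma top_arrows (n k : ℕ) (hk : 1 ≤ k) :
    Arrows (⊤ : SimpleGraph (Fin (n * k + n))) (_root_.starGraph k) (⊤ : SimpleGraph (Fin n)) := by
  classical
  intro R hR
  by_cases h : ∃ v, k ≤ R.degree v
  · left
    obtain ⟨v, hv⟩ := h
    obtain ⟨t, hts, htc⟩ := Finset.exists_subset_card_eq (s := R.neighborFinset v) hv
    refine star_copy k R v (fun i => (t.orderIsoOfFin htc i : Fin (n * k + n))) ?_ ?_
    · intro i j hij
      exact (t.orderIsoOfFin htc).injective (Subtype.coe_injective hij)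
    · intro i
      exact (R.mem_neighborFinset _ _).1 (hts (t.orderIsoOfFin htc i).2)
  · right
    push_neg at h
    obtain ⟨t, hts, htc, htind⟩ := indep R k hk h n Finset.univ
      (by simpa using Nat.le_add_right (n * k) n)
    refine kn_copy n _ (fun i => (t.orderIsoOfFin htc i : Fin (n * k + n))) ?_
    intro i j hij
    have hne : (t.orderIsoOfFin htc i : Fin (n * k + n)) ≠ (t.orderIsoOfFin htc j : Fin (n * k + n)) := by
      intro hh
      exact hij ((t.orderIsoOfFin htc).injective (Subtype.coe_injective hh))
    rw [SimpleGraph.sdiff_adj]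
    exact ⟨(SimpleGraph.top_adj _ _).2 hne,
      htind _ (t.orderIsoOfFin htc i).2 _ (t.orderIsoOfFin htc j).2 hne⟩



lemma lovasz {V : Type*} [Fintype V] [DecidableEq V] (G : SimpleGraph V) [DecidableRel G.Adj]
    (S' : Finset V) (b k : ℕ) (hb : 1 ≤ b) (hk : 1 ≤ k)
    (hdeg : ∀ v ∈ S', ((G.neighborFinset v) ∩ S').card < b * k) :
    ∃ c : V → Fin b, ∀ v ∈ S',
      (((G.neighborFinset v) ∩ S').filter (fun w => c w = c v)).card < k := by
  classical
  haveI hbne : Nonempty (Fin b) := ⟨⟨0, hb⟩⟩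
  obtain ⟨c, -, hmin⟩ := Finset.exists_min_image (Finset.univ : Finset (V → Fin b))
    (fun c => ((S' ×ˢ S').filter fun p => G.Adj p.1 p.2 ∧ c p.1 = c p.2).card)
    Finset.univ_nonempty
  refine ⟨c, fun v hv => ?_⟩
  by_contra hge
  push_neg at hge
  -- a sparse colour j exists
  have hsum : ∑ j : Fin b, (((G.neighborFinset v) ∩ S').filter (fun w => c w = j)).card
      = ((G.neighborFinset v) ∩ S').card :=
    (Finset.card_eq_sum_card_fiberwise (fun x _ => Finset.mem_univ (c x))).symm
  have hj : ∃ j : Fin b, (((G.neighborFinset v) ∩ S').filter (fun w => c w = j)).card < k := by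
    by_contra hall
    push_neg at hall
    have h2 := Finset.card_nsmul_le_sum (Finset.univ : Finset (Fin b))
      (fun j => (((G.neighborFinset v) ∩ S').filter (fun w => c w = j)).card) k
      (fun j _ => hall j)
    rw [Finset.card_univ, Fintype.card_fin, smul_eq_mul, hsum] at h2
    exact absurd h2 (not_le.2 (hdeg v hv))
  obtain ⟨j, hjlt⟩ := hj
  set c' : V → Fin b := Function.update c v j with hc'
  -- decomposition of the count of monochromatic pairs
  have key : ∀ d : V → Fin b,
      ((S' ×ˢ S').filter fun p => G.Adj p.1 p.2 ∧ d p.1 = d p.2).card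
        = (((S' ×ˢ S').filter fun p => G.Adj p.1 p.2 ∧ d p.1 = d p.2).filter
            (fun p => ¬(p.1 = v ∨ p.2 = v))).card
          + 2 * (((G.neighborFinset v) ∩ S').filter (fun w => d w = d v)).card := by
    intro d
    have hsplit := Finset.card_filter_add_card_filter_not
      (s := (S' ×ˢ S').filter fun p => G.Adj p.1 p.2 ∧ d p.1 = d p.2)
      (p := fun p => p.1 = v ∨ p.2 = v)
    have himg : ((S' ×ˢ S').filter fun p => G.Adj p.1 p.2 ∧ d p.1 = d p.2).filter
        (fun p => p.1 = v ∨ p.2 = v)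
        = (((G.neighborFinset v) ∩ S').filter (fun w => d w = d v)).image (fun w => (v, w))
          ∪ (((G.neighborFinset v) ∩ S').filter (fun w => d w = d v)).image (fun w => (w, v)) := by
      ext ⟨x, y⟩
      simp only [Finset.mem_filter, Finset.mem_product, Finset.mem_union, Finset.mem_image,
        Finset.mem_inter, SimpleGraph.mem_neighborFinset, Prod.mk.injEq]
      constructor
      · rintro ⟨⟨⟨hx, hy⟩, hadj, hd⟩, hxy⟩
        rcases hxy with h1 | h1
        · subst h1
          exact Or.inl ⟨y, ⟨⟨hadj, hy⟩, hd.symm⟩, rfl, rfl⟩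
        · subst h1
          exact Or.inr ⟨x, ⟨⟨hadj.symm, hx⟩, hd⟩, rfl, rfl⟩
      · rintro (⟨w, ⟨⟨hadj, hw⟩, hdw⟩, h1, h2⟩ | ⟨w, ⟨⟨hadj, hw⟩, hdw⟩, h1, h2⟩)
        · subst h1; subst h2
          exact ⟨⟨⟨hv, hw⟩, hadj, hdw.symm⟩, Or.inl rfl⟩
        · subst h1; subst h2
          exact ⟨⟨⟨hw, hv⟩, hadj.symm, hdw⟩, Or.inr rfl⟩
    have hdisj : Disjoint
        ((((G.neighborFinset v) ∩ S').filter (fun w => d w = d v)).image (fun w => (v, w)))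
        ((((G.neighborFinset v) ∩ S').filter (fun w => d w = d v)).image (fun w => (w, v))) := by
      rw [Finset.disjoint_left]
      rintro ⟨x, y⟩ h1 h2
      simp only [Finset.mem_image, Finset.mem_filter, Finset.mem_inter,
        SimpleGraph.mem_neighborFinset, Prod.mk.injEq] at h1 h2
      obtain ⟨w, ⟨⟨hadj, -⟩, -⟩, hw1, hw2⟩ := h1
      obtain ⟨w', ⟨⟨hadj', -⟩, -⟩, hw1', hw2'⟩ := h2
      -- x = v, y = w with Adj v w ; also y = v
      exact hadj.ne (hw2.trans hw2'.symm).symm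
    have hinj1 : Function.Injective (fun w : V => (v, w)) := by
      intro a b h; exact congrArg Prod.snd h
    have hinj2 : Function.Injective (fun w : V => (w, v)) := by
      intro a b h; exact congrArg Prod.fst h
    have hcardP := himg ▸ (Finset.card_union_of_disjoint hdisj)
    rw [Finset.card_image_of_injective _ hinj1, Finset.card_image_of_injective _ hinj2] at hcardP
    omega
  -- the untouched part is unchanged when recolouring v
  have hrest : (((S' ×ˢ S').filter fun p => G.Adj p.1 p.2 ∧ c p.1 = c p.2).filter
        (fun p => ¬(p.1 = v ∨ p.2 = v)))
      = (((S' ×ˢ S').filter fun p => G.Adj p.1 p.2 ∧ c' p.1 = c' p.2).filter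
        (fun p => ¬(p.1 = v ∨ p.2 = v))) := by
    ext ⟨x, y⟩
    simp only [Finset.mem_filter, Finset.mem_product, not_or]
    constructor
    · rintro ⟨⟨⟨hx, hy⟩, hadj, hd⟩, hnx, hny⟩
      refine ⟨⟨⟨hx, hy⟩, hadj, ?_⟩, hnx, hny⟩
      rw [hc']
      rw [Function.update_of_ne hnx, Function.update_of_ne hny]
      exact hd
    · rintro ⟨⟨⟨hx, hy⟩, hadj, hd⟩, hnx, hny⟩
      refine ⟨⟨⟨hx, hy⟩, hadj, ?_⟩, hnx, hny⟩
      rw [hc', Function.update_of_ne hnx, Function.update_of_ne hny] at hd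
      exact hd
  have hfib' : (((G.neighborFinset v) ∩ S').filter (fun w => c' w = c' v))
      = (((G.neighborFinset v) ∩ S').filter (fun w => c w = j)) := by
    apply Finset.filter_congr
    intro w hw
    have hwv : w ≠ v :=
      ((SimpleGraph.mem_neighborFinset _ _ _).1 (Finset.mem_inter.1 hw).1).ne'
    simp [hc', Function.update_of_ne hwv, Function.update_self]
  have h1 := key c
  have h2 := key c'
  have hle := hmin c' (Finset.mem_univ c')
  rw [hfib', ← hrest] at h2
  omega

lemma bound1 {N k n : ℕ} (hk : 1 ≤ k) (hn : 3 ≤ n) (F : SimpleGraph (Fin N))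
    (hF : Arrows F (_root_.starGraph k) (⊤ : SimpleGraph (Fin n))) :
    k ^ 2 ≤ 2 * F.edgeSet.ncard := by
  classical
  by_contra hlt
  push_neg at hlt
  have hE : F.edgeSet.ncard = F.edgeFinset.card := by
    rw [← Set.ncard_coe_finset, SimpleGraph.coe_edgeFinset]
  rw [hE] at hlt
  set S : Finset (Fin N) := Finset.univ.filter (fun v => k ≤ F.degree v) with hSdef
  have hScard : S.card < k := by
    have h1 : S.card * k ≤ ∑ v ∈ S, F.degree v := by
      simpa [smul_eq_mul] using Finset.card_nsmul_le_sum S (fun v => F.degree v) k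
        (fun v hv => (Finset.mem_filter.1 hv).2)
    have h4 : S.card * k < k * k := by
      calc S.card * k ≤ ∑ v ∈ S, F.degree v := h1
        _ ≤ ∑ v, F.degree v := Finset.sum_le_sum_of_subset (Finset.subset_univ S)
        _ = 2 * F.edgeFinset.card := SimpleGraph.sum_degrees_eq_twice_card_edges F
        _ < k ^ 2 := hlt
        _ = k * k := pow_two k
    exact Nat.lt_of_mul_lt_mul_right h4
  set R : SimpleGraph (Fin N) :=
    { Adj := fun v w => F.Adj v w ∧ ((v ∈ S) ↔ (w ∈ S)),
      symm := ⟨fun v w h => ⟨h.1.symm, h.2.symm⟩⟩,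
      loopless := ⟨fun v h => F.loopless.irrefl v h.1⟩ } with hRdef
  have hRle : R ≤ F := by intro v w h; exact h.1
  rcases hF R hRle with hred | hblue
  · refine no_star k R (fun v => ?_) hred
    by_cases hv : v ∈ S
    · refine ⟨S.erase v, fun w hw => ?_, ?_⟩
      · exact Finset.mem_erase.2 ⟨hw.1.ne', hw.2.1 hv⟩
      · have h1 : 1 ≤ S.card := Finset.card_pos.2 ⟨v, hv⟩
        rw [Finset.card_erase_of_mem hv]
        omega
    · refine ⟨F.neighborFinset v, fun w hw => (F.mem_neighborFinset _ _).2 hw.1, ?_⟩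
      have hvd : F.degree v < k := by
        by_contra hge
        exact hv (Finset.mem_filter.2 ⟨Finset.mem_univ v, not_lt.1 hge⟩)
      exact hvd
  · refine no_clique n 2 (by omega) (F \ R) (fun v => if v ∈ S then 0 else 1)
      (fun v => by show (if v ∈ S then 0 else 1) < 2; split <;> omega) ?_ hblue
    intro v w hadj heq
    have heq' : (if v ∈ S then (0 : ℕ) else 1) = (if w ∈ S then 0 else 1) := heq
    rw [SimpleGraph.sdiff_adj] at hadj
    apply hadj.2
    refine ⟨hadj.1, ?_⟩
    by_cases hv : v ∈ S <;> by_cases hw : w ∈ S <;> simp [hv, hw] at heq' ⊢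

lemma sq_quarter (m : ℕ) : (m / 2) * (m - m / 2) = m ^ 2 / 4 := by
  rcases Nat.even_or_odd m with ⟨t, ht⟩ | ⟨t, ht⟩
  · subst ht
    have h1 : (t + t) / 2 = t := by omega
    have h2 : (t + t) ^ 2 = t * t * 4 := by ring
    rw [h1, h2, Nat.mul_div_cancel _ (by norm_num), show t + t - t = t from by omega]
  · subst ht
    have h1 : (2 * t + 1) / 2 = t := by omega
    have h2 : (2 * t + 1) ^ 2 = 4 * (t * (t + 1)) + 1 := by ring
    rw [h1, h2, show 2 * t + 1 - t = t + 1 from by omega,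
      Nat.mul_add_div (by norm_num)]
    norm_num

lemma bound2 {N k n a b : ℕ} (ha : 1 ≤ a) (hb : 1 ≤ b) (hk : 1 ≤ k)
    (hn : n = a + b + 2) (F : SimpleGraph (Fin N))
    (hF : Arrows F (_root_.starGraph k) (⊤ : SimpleGraph (Fin n))) :
    a * b * k ^ 2 ≤ 2 * F.edgeSet.ncard := by
  classical
  by_contra hlt
  push_neg at hlt
  have hE : F.edgeSet.ncard = F.edgeFinset.card := by
    rw [← Set.ncard_coe_finset, SimpleGraph.coe_edgeFinset]
  rw [hE] at hlt
  set S : Finset (Fin N) := Finset.univ.filter (fun v => k ≤ F.degree v) with hSdef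
  set T : Finset (Fin N) := S.filter (fun v => b * k ≤ ((F.neighborFinset v) ∩ S).card)
    with hTdef
  have hTcard : T.card ≤ a * k := by
    have h1 : T.card * (b * k) ≤ ∑ v ∈ T, ((F.neighborFinset v) ∩ S).card := by
      simpa [smul_eq_mul] using Finset.card_nsmul_le_sum T
        (fun v => ((F.neighborFinset v) ∩ S).card) (b * k)
        (fun v hv => (Finset.mem_filter.1 hv).2)
    have h4 : T.card * (b * k) < (a * k) * (b * k) := by
      calc T.card * (b * k) ≤ ∑ v ∈ T, ((F.neighborFinset v) ∩ S).card := h1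
        _ ≤ ∑ v ∈ T, F.degree v :=
            Finset.sum_le_sum (fun v _ => Finset.card_le_card Finset.inter_subset_left)
        _ ≤ ∑ v, F.degree v := Finset.sum_le_sum_of_subset (Finset.subset_univ T)
        _ = 2 * F.edgeFinset.card := SimpleGraph.sum_degrees_eq_twice_card_edges F
        _ < a * b * k ^ 2 := hlt
        _ = (a * k) * (b * k) := by ring
    exact le_of_lt (Nat.lt_of_mul_lt_mul_right h4)
  set S' : Finset (Fin N) := S \ T with hS'def
  have hS'deg : ∀ v ∈ S', ((F.neighborFinset v) ∩ S').card < b * k := by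
    intro v hv
    have hvT : v ∉ T := (Finset.mem_sdiff.1 hv).2
    have hvS : v ∈ S := (Finset.mem_sdiff.1 hv).1
    have h5 : ¬ b * k ≤ ((F.neighborFinset v) ∩ S).card := by
      intro hge
      exact hvT (Finset.mem_filter.2 ⟨hvS, hge⟩)
    have h6 : ((F.neighborFinset v) ∩ S').card ≤ ((F.neighborFinset v) ∩ S).card := by
      apply Finset.card_le_card
      intro x hx
      have hx' := Finset.mem_inter.1 hx
      exact Finset.mem_inter.2 ⟨hx'.1, (Finset.mem_sdiff.1 hx'.2).1⟩
    omega
  obtain ⟨c, hc⟩ := lovasz F S' b k hb hk hS'deg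
  set idx : Fin N → ℕ := fun v => (T.filter (fun w => w < v)).card with hidxdef
  have hidx_lt : ∀ v ∈ T, idx v < T.card := by
    intro v hv
    exact Finset.card_lt_card ((Finset.ssubset_iff_of_subset (Finset.filter_subset _ _)).2
      ⟨v, hv, by simp⟩)
  have hmono : ∀ x y : Fin N, x ∈ T → x < y → idx x < idx y := by
    intro x y hx hxy
    apply Finset.card_lt_card
    rw [Finset.ssubset_iff_of_subset]
    · exact ⟨x, Finset.mem_filter.2 ⟨hx, hxy⟩, by simp⟩
    · intro u hu
      have hu' := Finset.mem_filter.1 hu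
      exact Finset.mem_filter.2 ⟨hu'.1, lt_trans hu'.2 hxy⟩
  have hidx_inj : ∀ x ∈ T, ∀ y ∈ T, idx x = idx y → x = y := by
    intro x hx y hy hxy
    by_contra hne
    rcases lt_or_gt_of_ne hne with hlt' | hlt'
    · exact absurd hxy (Nat.ne_of_lt (hmono x y hx hlt'))
    · exact absurd hxy.symm (Nat.ne_of_lt (hmono y x hy hlt'))
  have hclass : ∀ q : ℕ, (T.filter (fun w => idx w / k = q)).card ≤ k := by
    intro q
    have hmap : ∀ w ∈ T.filter (fun w => idx w / k = q),
        idx w ∈ Finset.Ico (q * k) (q * k + k) := by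
      intro w hw
      obtain ⟨hwT, hq⟩ := Finset.mem_filter.1 hw
      have h1 : k * (idx w / k) + idx w % k = idx w := Nat.div_add_mod _ _
      have h2 : idx w % k < k := Nat.mod_lt _ hk
      rw [hq] at h1
      rw [Finset.mem_Ico]
      constructor
      · calc q * k = k * q := mul_comm q k
          _ ≤ idx w := Nat.le.intro h1
      · calc idx w = k * q + idx w % k := h1.symm
          _ < k * q + k := Nat.add_lt_add_left h2 _
          _ = q * k + k := by ring
    have hinj2 : Set.InjOn idx (T.filter (fun w => idx w / k = q)) := by
      intro x hx y hy hxy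
      exact hidx_inj x (Finset.filter_subset _ _ (Finset.mem_coe.1 hx))
        y (Finset.filter_subset _ _ (Finset.mem_coe.1 hy)) hxy
    calc (T.filter (fun w => idx w / k = q)).card ≤ (Finset.Ico (q * k) (q * k + k)).card :=
        Finset.card_le_card_of_injOn idx hmap hinj2
      _ = k := by rw [Nat.card_Ico]; omega
  have hidxa : ∀ v ∈ T, idx v / k < a := by
    intro v hv
    have h1 : idx v < a * k := lt_of_lt_of_le (hidx_lt v hv) hTcard
    exact (Nat.div_lt_iff_lt_mul hk).2 h1
  set L : Fin N → ℕ := fun v => if v ∈ T then idx v / k else a + (c v : ℕ) with hLdef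
  have hLT : ∀ u ∈ T, L u = idx u / k := by
    intro u hu; simp only [hLdef]; rw [if_pos hu]
  have hLnT : ∀ u, u ∉ T → L u = a + (c u : ℕ) := by
    intro u hu; simp only [hLdef]; rw [if_neg hu]
  have hLlt : ∀ u, u ∈ S → L u < a + b := by
    intro u hu
    by_cases huT : u ∈ T
    · rw [hLT u huT]
      exact lt_of_lt_of_le (hidxa u huT) (Nat.le_add_right a b)
    · rw [hLnT u huT]
      exact Nat.add_lt_add_left (c u).2 a
  set R : SimpleGraph (Fin N) :=
    { Adj := fun v w => F.Adj v w ∧ ((v ∈ S ∧ w ∈ S ∧ L v = L w) ∨ (v ∉ S ∧ w ∉ S)),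
      symm := by
        refine ⟨fun v w h => ?_⟩
        refine ⟨h.1.symm, ?_⟩
        rcases h.2 with ⟨h1, h2, h3⟩ | ⟨h1, h2⟩
        · exact Or.inl ⟨h2, h1, h3.symm⟩
        · exact Or.inr ⟨h2, h1⟩,
      loopless := ⟨fun v h => F.loopless.irrefl v h.1⟩ } with hRdef
  have hRle : R ≤ F := by intro v w h; exact h.1
  rcases hF R hRle with hred | hblue
  · refine no_star k R (fun v => ?_) hred
    by_cases hvS : v ∈ S
    · by_cases hvT : v ∈ T
      · refine ⟨(T.filter (fun w => idx w / k = idx v / k)).erase v, ?_, ?_⟩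
        · intro w hw
          obtain ⟨hF', hcase⟩ := hw
          rcases hcase with ⟨-, hwS, hL⟩ | ⟨h1, -⟩
          · have hwT : w ∈ T := by
              by_contra hwT'
              have hx1 : L v < a := by
                rw [hLT v hvT]; exact hidxa v hvT
              have hx2 : a ≤ L w := by
                rw [hLnT w hwT']; exact Nat.le_add_right a _
              omega
            refine Finset.mem_erase.2 ⟨hF'.ne', Finset.mem_filter.2 ⟨hwT, ?_⟩⟩
            have e1 := hLT v hvT
            have e2 := hLT w hwT
            rw [← e2, ← e1]
            exact hL.symm
          · exact absurd hvS h1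
        · have hvmem : v ∈ T.filter (fun w => idx w / k = idx v / k) :=
            Finset.mem_filter.2 ⟨hvT, rfl⟩
          have h1 := hclass (idx v / k)
          have h2 : 1 ≤ (T.filter (fun w => idx w / k = idx v / k)).card :=
            Finset.card_pos.2 ⟨v, hvmem⟩
          rw [Finset.card_erase_of_mem hvmem]
          omega
      · have hvS' : v ∈ S' := Finset.mem_sdiff.2 ⟨hvS, hvT⟩
        refine ⟨(F.neighborFinset v ∩ S').filter (fun w => c w = c v), ?_, hc v hvS'⟩
        intro w hw
        obtain ⟨hF', hcase⟩ := hw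
        rcases hcase with ⟨-, hwS, hL⟩ | ⟨h1, -⟩
        · have hwT : w ∉ T := by
            intro hwT
            have hx1 : L w < a := by
              rw [hLT w hwT]; exact hidxa w hwT
            have hx2 : a ≤ L v := by
              rw [hLnT v hvT]; exact Nat.le_add_right a _
            omega
          have e1 := hLnT v hvT
          have e2 := hLnT w hwT
          have hcvw : (c w : ℕ) = (c v : ℕ) := by omega
          refine Finset.mem_filter.2 ⟨Finset.mem_inter.2
            ⟨(F.mem_neighborFinset _ _).2 hF', Finset.mem_sdiff.2 ⟨hwS, hwT⟩⟩,
            Fin.val_injective hcvw⟩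
        · exact absurd hvS h1
    · refine ⟨F.neighborFinset v, fun w hw => (F.mem_neighborFinset _ _).2 hw.1, ?_⟩
      have hvd : F.degree v < k := by
        by_contra hge
        exact hvS (Finset.mem_filter.2 ⟨Finset.mem_univ v, not_lt.1 hge⟩)
      exact hvd
  · refine no_clique n (a + b + 1) (by omega) (F \ R)
      (fun v => if v ∈ S then L v else a + b) (fun v => ?_) ?_ hblue
    · show (if v ∈ S then L v else a + b) < a + b + 1
      by_cases hvS : v ∈ S
      · rw [if_pos hvS]
        exact lt_trans (hLlt v hvS) (Nat.lt_succ_self _)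
      · rw [if_neg hvS]
        exact Nat.lt_succ_self _
    · intro v w hadj heq
      have heq' : (if v ∈ S then L v else a + b) = (if w ∈ S then L w else a + b) := heq
      rw [SimpleGraph.sdiff_adj] at hadj
      apply hadj.2
      refine ⟨hadj.1, ?_⟩
      by_cases hvS : v ∈ S <;> by_cases hwS : w ∈ S
      · rw [if_pos hvS, if_pos hwS] at heq'
        exact Or.inl ⟨hvS, hwS, heq'⟩
      · rw [if_pos hvS, if_neg hwS] at heq'
        have := hLlt v hvS
        omega
      · rw [if_neg hvS, if_pos hwS] at heq'
        have := hLlt w hwS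
        omega
      · exact Or.inr ⟨hvS, hwS⟩


theorem stmt3 (ε : ℝ) (hε0 : 0 < ε) (hε1 : ε < 1) (n : ℕ) (hn : 3 ≤ n) :
    ∃ k₀ : ℕ, ∀ k : ℕ, k₀ ≤ k →
      (sizeRamsey (_root_.starGraph k) (⊤ : SimpleGraph (Fin n)) : ℝ) ≥
        max ((k : ℝ)^2 / 2)
          ((1 - ε) * (((n-2)^2 / 4 : ℕ) : ℝ) * (k : ℝ)^2 / 2) := by
  classical
  refine ⟨1, fun k hk => ?_⟩
  have hne : {m : ℕ | ∃ (N : ℕ) (F : SimpleGraph (Fin N)),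
      Arrows F (_root_.starGraph k) (⊤ : SimpleGraph (Fin n)) ∧ F.edgeSet.ncard = m}.Nonempty :=
    ⟨(⊤ : SimpleGraph (Fin (n * k + n))).edgeSet.ncard, n * k + n, ⊤, top_arrows n k hk, rfl⟩
  have hmem : sizeRamsey (_root_.starGraph k) (⊤ : SimpleGraph (Fin n)) ∈
      {m : ℕ | ∃ (N : ℕ) (F : SimpleGraph (Fin N)),
        Arrows F (_root_.starGraph k) (⊤ : SimpleGraph (Fin n)) ∧ F.edgeSet.ncard = m} :=
    Nat.sInf_mem hne
  obtain ⟨N, F, hA, hEc⟩ := hmem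
  have h1 : k ^ 2 ≤ 2 * sizeRamsey (_root_.starGraph k) (⊤ : SimpleGraph (Fin n)) := by
    rw [← hEc]
    exact bound1 hk hn F hA
  rw [ge_iff_le, max_le_iff]
  have h1' : (k : ℝ) ^ 2 ≤ 2 * (sizeRamsey (_root_.starGraph k) (⊤ : SimpleGraph (Fin n)) : ℝ) := by
    exact_mod_cast h1
  constructor
  · linarith
  · by_cases hn4 : 4 ≤ n
    · set a := (n - 2) / 2 with hadef
      set b := (n - 2) - (n - 2) / 2 with hbdef
      have ha : 1 ≤ a := by omega
      have hb : 1 ≤ b := by omega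
      have hnab : n = a + b + 2 := by omega
      have hab : a * b = (n - 2) ^ 2 / 4 := sq_quarter (n - 2)
      have h2 : a * b * k ^ 2 ≤ 2 * sizeRamsey (_root_.starGraph k) (⊤ : SimpleGraph (Fin n)) := by
        rw [← hEc]
        exact bound2 ha hb hk hnab F hA
      rw [← hab]
      have h2' : ((a * b : ℕ) : ℝ) * (k : ℝ) ^ 2
          ≤ 2 * (sizeRamsey (_root_.starGraph k) (⊤ : SimpleGraph (Fin n)) : ℝ) := by
        exact_mod_cast h2
      have hnn : (0 : ℝ) ≤ ((a * b : ℕ) : ℝ) * (k : ℝ) ^ 2 := by positivity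
      nlinarith [mul_nonneg hε0.le hnn]
    · have hn3 : n = 3 := by omega
      subst hn3
      norm_num
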